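/- Let P0, P1, P2 be nonzero real polynomials and e a nonzero real constant such that P2·P0·P1 + P0·P1' − P1·P0' = e·P1^3. Then deg P0 + deg P2 = 2·deg P1, and the leading coefficients satisfy lc(P2)·lc(P0) = e·lc(P1)^2. -/
import Mathlib


open Polynomial

theorem darboux_degree_relation (P0 P1 P2 : ℝ[X]) (e : ℝ)
    (h0 : P0 ≠ 0) (h1 : P1 ≠ 0) (h2 : P2 ≠ 0) (he : e ≠ 0)
    (heq : P2 * P0 * P1 + P0 * (derivative P1) - P1 * (derivative P0) = C e * P1 ^ 3) :
    P0.natDegree + P2.natDegree = 2 * P1.natDegree ∧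
      P2.leadingCoeff * P0.leadingCoeff = e * P1.leadingCoeff ^ 2 := by
  set W : ℝ[X] := P0 * derivative P1 - P1 * derivative P0 with hWdef
  have hA : P2 * P0 * P1 ≠ 0 := mul_ne_zero (mul_ne_zero h2 h0) h1
  have hdW : W.degree < (P2 * P0 * P1).degree := by
    have h01 : (P0 * P1).degree ≤ (P2 * P0 * P1).degree := by
      rw [show P2 * P0 * P1 = P2 * (P0 * P1) by ring]
      nth_rewrite 2 [degree_mul]
      exact le_add_of_nonneg_left (zero_le_degree_iff.mpr h2)
    refine lt_of_lt_of_le ?_ h01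
    refine lt_of_le_of_lt (degree_sub_le _ _) (max_lt ?_ ?_)
    · rw [degree_mul, degree_mul]
      exact WithBot.add_lt_add_left (degree_ne_bot.mpr h0) (degree_derivative_lt h1)
    · rw [degree_mul, degree_mul, add_comm P0.degree]
      exact WithBot.add_lt_add_left (degree_ne_bot.mpr h1) (degree_derivative_lt h0)
  have hB : P2 * P0 * P1 + W = C e * P1 ^ 3 := by rw [hWdef]; linear_combination heq
  have hdeg : (P2 * P0 * P1).degree = (C e * P1 ^ 3).degree := by
    rw [← hB, degree_add_eq_left_of_degree_lt hdW]
  have hlc : (P2 * P0 * P1).leadingCoeff = (C e * P1 ^ 3).leadingCoeff := by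
    rw [← hB, leadingCoeff_add_of_degree_lt' hdW]
  have hCe : (C e : ℝ[X]) ≠ 0 := by simpa using he
  constructor
  · have hn : (P2 * P0 * P1).natDegree = (C e * P1 ^ 3).natDegree :=
      natDegree_eq_of_degree_eq hdeg
    rw [natDegree_mul (mul_ne_zero h2 h0) h1, natDegree_mul h2 h0,
      natDegree_mul hCe (pow_ne_zero _ h1), natDegree_C, natDegree_pow] at hn
    omega
  · rw [leadingCoeff_mul, leadingCoeff_mul, leadingCoeff_mul, leadingCoeff_pow,
      leadingCoeff_C] at hlc
    have h1lcne : P1.leadingCoeff ≠ 0 := leadingCoeff_ne_zero.mpr h1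
    apply mul_right_cancel₀ h1lcne
    linear_combination hlc
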